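/- Let s be a positive integer, let x ∈ (0, 1), and let F : ℝ → ℝ be continuous on the closed interval [1/(s+1), 1/s]. Then the Riemann sums converge: lim_{n → ∞} (1/n) · Σ_{i = ⌊(n−⌊xn⌋)/(s+1)⌋ + 1}^{⌊(n−⌊xn⌋)/s⌋} F( i/(n−⌊xn⌋) ) = (1−x) · ∫_{1/(s+1)}^{1/s} F(t) dt. -/

import Mathlib

open Filter Real Topology

private lemma nat_div_bounds (m k : ℕ) (hk : 0 < k) (hm : 0 < m) :
    ((m / k : ℕ) : ℝ) / m ≤ 1 / k ∧ 1 / (k : ℝ) < (((m / k : ℕ) : ℝ) + 1) / m := by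
  have hmR : (0 : ℝ) < m := by exact_mod_cast hm
  have hkR : (0 : ℝ) < k := by exact_mod_cast hk
  constructor
  · rw [div_le_div_iff₀ hmR hkR, one_mul]
    have h : (m / k) * k ≤ m := Nat.div_mul_le_self m k
    exact_mod_cast h
  · rw [div_lt_div_iff₀ hkR hmR, one_mul]
    have h : m < (m / k + 1) * k := by
      have h1 := Nat.div_add_mod m k
      have h2 := Nat.mod_lt m hk
      calc m = k * (m / k) + m % k := h1.symm
        _ < k * (m / k) + k := by omega
        _ = (m / k + 1) * k := by ring
    exact_mod_cast h

private lemma riemann_core (s : ℕ) (hs : 0 < s) (G : ℝ → ℝ) (hG : Continuous G) :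
    Tendsto (fun m : ℕ => (1 / (m : ℝ)) *
        ∑ i ∈ Finset.Icc (m / (s + 1) + 1) (m / s), G ((i : ℝ) / m)) atTop
      (𝓝 (∫ t in (1 / ((s : ℝ) + 1))..(1 / (s : ℝ)), G t)) := by
  set α : ℝ := 1 / ((s : ℝ) + 1) with hα_def
  set β : ℝ := 1 / (s : ℝ) with hβ_def
  have hsR : (0 : ℝ) < s := by exact_mod_cast hs
  have hsR1 : (1 : ℝ) ≤ s := by exact_mod_cast hs
  have hα0 : 0 < α := by positivity
  have hβ0 : 0 < β := by positivity
  have hαβ : α ≤ β := by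
    apply one_div_le_one_div_of_le hsR; linarith
  have hβ1 : β ≤ 1 := by
    rw [hβ_def, div_le_one hsR]; exact hsR1
  -- bound of G on [0,1]
  obtain ⟨C, hC⟩ := (isCompact_Icc (a := (0:ℝ)) (b := 1)).exists_bound_of_continuousOn
    hG.continuousOn
  have hC0 : 0 ≤ C := le_trans (norm_nonneg _) (hC 0 (by norm_num))
  -- uniform continuity on [0,1]
  rw [Metric.tendsto_atTop]
  intro ε hε
  have hu := (isCompact_Icc (a := (0:ℝ)) (b := 1)).uniformContinuousOn_of_continuous
    hG.continuousOn
  rw [Metric.uniformContinuousOn_iff] at hu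
  obtain ⟨δ, hδ0, hδ⟩ := hu (ε / 2) (by positivity)
  obtain ⟨N, hN⟩ := exists_nat_gt (max (1 / δ) ((4 * (C + 1)) / ε))
  refine ⟨N + 1, fun m hm => ?_⟩
  have hm0 : 0 < m := by omega
  have hmR : (0 : ℝ) < m := by exact_mod_cast hm0
  have hmN : (N : ℝ) < m := by exact_mod_cast (by omega : N < m)
  have h1mδ : 1 / (m : ℝ) < δ := by
    have h1 : 1 / δ < (m : ℝ) := lt_trans (lt_of_le_of_lt (le_max_left _ _) hN) hmN
    rw [div_lt_iff₀ hmR]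
    rw [div_lt_iff₀ hδ0] at h1
    linarith [mul_comm δ (m : ℝ)]
  have hCm : (C + 1) / (m : ℝ) < ε / 4 := by
    have h1 : 4 * (C + 1) / ε < (m : ℝ) := lt_trans (lt_of_le_of_lt (le_max_right _ _) hN) hmN
    have h2 : 4 * (C + 1) < ε * m := by
      rw [div_lt_iff₀ hε] at h1; linarith
    rw [div_lt_div_iff₀ hmR (by norm_num : (0:ℝ) < 4)]
    linarith
  set a : ℕ := m / (s + 1) with ha_def
  set b : ℕ := m / s with hb_def
  have hab : a ≤ b := Nat.div_le_div_left (by omega) hs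
  have hbm : b ≤ m := Nat.div_le_self m s
  obtain ⟨hA1, hA2⟩ := nat_div_bounds m (s + 1) (by omega) hm0
  obtain ⟨hB1, hB2⟩ := nat_div_bounds m s hs hm0
  have hA1' : (a : ℝ) / m ≤ α := by
    rw [hα_def]; convert hA1 using 2 <;> push_cast <;> ring
  have hA2' : α < ((a : ℝ) + 1) / m := by
    rw [hα_def]; convert hA2 using 2 <;> push_cast <;> ring
  have hB1' : (b : ℝ) / m ≤ β := hB1
  have hB2' : β < ((b : ℝ) + 1) / m := hB2
  -- nodes
  set f : ℕ → ℝ := fun k => ((a : ℝ) + k) / m with hf_def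
  have hf0 : f 0 = (a : ℝ) / m := by simp [hf_def]
  have hflast : f (b - a) = (b : ℝ) / m := by
    simp only [hf_def]
    rw [Nat.cast_sub hab]
    ring
  have hfstep : ∀ k, f (k + 1) - f k = 1 / m := by
    intro k; simp only [hf_def]; push_cast; field_simp; ring
  have hfmono : ∀ k, f k ≤ f (k + 1) := by
    intro k
    have := hfstep k
    have h1 : (0:ℝ) < 1 / m := by positivity
    linarith
  have hfmem : ∀ k ≤ b - a, f k ∈ Set.Icc (0 : ℝ) 1 := by
    intro k hk
    constructor
    · apply div_nonneg _ hmR.le; positivity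
    · have h1 : ((a : ℝ) + k) / m ≤ (b : ℝ) / m := by
        gcongr
        have : a + k ≤ b := by omega
        exact_mod_cast this
      calc f k ≤ (b : ℝ) / m := h1
        _ ≤ β := hB1'
        _ ≤ 1 := hβ1
  have hint : ∀ u v : ℝ, IntervalIntegrable G MeasureTheory.volume u v :=
    fun u v => hG.intervalIntegrable u v
  -- rewrite the sum
  have hsum : (1 / (m : ℝ)) * ∑ i ∈ Finset.Icc (a + 1) b, G ((i : ℝ) / m) =
      ∑ k ∈ Finset.range (b - a), (1 / (m : ℝ)) * G (f (k + 1)) := by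
    rw [Finset.mul_sum, ← Finset.Ico_add_one_right_eq_Icc, Finset.sum_Ico_eq_sum_range]
    have hrange : b + 1 - (a + 1) = b - a := by omega
    rw [hrange]
    refine Finset.sum_congr rfl fun k _ => ?_
    congr 1
    simp only [hf_def]; push_cast; ring
  -- split the integral
  have hIsplit : (∫ t in (f 0)..(f (b - a)), G t) =
      ∑ k ∈ Finset.range (b - a), ∫ t in (f k)..(f (k + 1)), G t :=
    (intervalIntegral.sum_integral_adjacent_intervals fun k _ => hint _ _).symm
  -- term estimates
  have hterm : ∀ k ∈ Finset.range (b - a),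
      ‖(1 / (m : ℝ)) * G (f (k + 1)) - ∫ t in (f k)..(f (k + 1)), G t‖ ≤ ε / 2 * (1 / m) := by
    intro k hk
    rw [Finset.mem_range] at hk
    have hk1 : k + 1 ≤ b - a := hk
    have hmem1 : f (k + 1) ∈ Set.Icc (0 : ℝ) 1 := hfmem _ hk1
    have hmem0 : f k ∈ Set.Icc (0 : ℝ) 1 := hfmem _ (by omega)
    have hconst : (1 / (m : ℝ)) * G (f (k + 1)) =
        ∫ _ in (f k)..(f (k + 1)), G (f (k + 1)) := by
      rw [intervalIntegral.integral_const, smul_eq_mul, hfstep k]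
    rw [hconst, ← intervalIntegral.integral_sub intervalIntegrable_const (hint _ _)]
    have hbound : ∀ t ∈ Set.uIoc (f k) (f (k + 1)),
        ‖G (f (k + 1)) - G t‖ ≤ ε / 2 := by
      intro t ht
      rw [Set.uIoc_of_le (hfmono k)] at ht
      have htmem : t ∈ Set.Icc (0 : ℝ) 1 :=
        ⟨le_trans hmem0.1 ht.1.le, le_trans ht.2 hmem1.2⟩
      have hdist : dist (G (f (k + 1))) (G t) < ε / 2 := by
        apply hδ _ hmem1 _ htmem
        rw [Real.dist_eq, abs_of_nonneg (by linarith [ht.2] : (0:ℝ) ≤ f (k+1) - t)]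
        have := hfstep k
        have := ht.1
        linarith
      rw [Real.norm_eq_abs, ← Real.dist_eq]
      exact hdist.le
    calc ‖∫ t in (f k)..(f (k + 1)), (G (f (k + 1)) - G t)‖
        ≤ ε / 2 * |f (k + 1) - f k| :=
          intervalIntegral.norm_integral_le_of_norm_le_const hbound
      _ = ε / 2 * (1 / m) := by rw [hfstep k, abs_of_pos (by positivity)]
  -- sum estimate
  have hsum_est : ‖(1 / (m : ℝ)) * ∑ i ∈ Finset.Icc (a + 1) b, G ((i : ℝ) / m) -
      ∫ t in (f 0)..(f (b - a)), G t‖ ≤ ε / 2 := by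
    rw [hsum, hIsplit, ← Finset.sum_sub_distrib]
    calc ‖∑ k ∈ Finset.range (b - a),
          ((1 / (m : ℝ)) * G (f (k + 1)) - ∫ t in (f k)..(f (k + 1)), G t)‖
        ≤ ∑ k ∈ Finset.range (b - a), ‖(1 / (m : ℝ)) * G (f (k + 1)) -
          ∫ t in (f k)..(f (k + 1)), G t‖ := norm_sum_le _ _
      _ ≤ ∑ _k ∈ Finset.range (b - a), ε / 2 * (1 / m) := Finset.sum_le_sum hterm
      _ = (b - a : ℕ) * (ε / 2 * (1 / m)) := by
          rw [Finset.sum_const, Finset.card_range, nsmul_eq_mul]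
      _ ≤ (m : ℝ) * (ε / 2 * (1 / m)) := by
          apply mul_le_mul_of_nonneg_right _ (by positivity)
          have hba : (b - a : ℕ) ≤ m := le_trans (Nat.sub_le b a) hbm
          exact_mod_cast hba
      _ = ε / 2 := by field_simp; try ring
  -- edge estimate
  have hedge : (∫ t in (f 0)..(f (b - a)), G t) - (∫ t in α..β, G t) =
      (∫ t in (f 0)..α, G t) + ∫ t in β..(f (b - a)), G t := by
    have h1 : (∫ t in (f 0)..α, G t) + ∫ t in α..f (b - a), G t =
        ∫ t in (f 0)..(f (b - a)), G t :=
      intervalIntegral.integral_add_adjacent_intervals (hint _ _) (hint _ _)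
    have h2 : (∫ t in α..β, G t) + ∫ t in β..(f (b - a)), G t =
        ∫ t in α..f (b - a), G t :=
      intervalIntegral.integral_add_adjacent_intervals (hint _ _) (hint _ _)
    linarith
  have hedge1 : ‖∫ t in (f 0)..α, G t‖ ≤ C * (1 / m) := by
    have hbound : ∀ t ∈ Set.uIoc (f 0) α, ‖G t‖ ≤ C := by
      intro t ht
      rw [Set.uIoc_of_le (hf0 ▸ hA1')] at ht
      apply hC
      constructor
      · exact le_trans (hfmem 0 (by omega)).1 ht.1.le
      · exact le_trans ht.2 (le_trans hαβ hβ1)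
    calc ‖∫ t in (f 0)..α, G t‖ ≤ C * |α - f 0| :=
          intervalIntegral.norm_integral_le_of_norm_le_const hbound
      _ ≤ C * (1 / m) := by
          apply mul_le_mul_of_nonneg_left _ hC0
          rw [hf0, abs_of_nonneg (by linarith)]
          have he : ((a:ℝ) + 1) / m = (a:ℝ)/m + 1/m := by ring
          have h3 := hA2'
          rw [he] at h3
          linarith
  have hedge2 : ‖∫ t in β..(f (b - a)), G t‖ ≤ C * (1 / m) := by
    have hble : f (b - a) ≤ β := hflast ▸ hB1'
    have hbound : ∀ t ∈ Set.uIoc β (f (b - a)), ‖G t‖ ≤ C := by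
      intro t ht
      rw [Set.uIoc_comm, Set.uIoc_of_le hble] at ht
      apply hC
      constructor
      · exact le_trans (hfmem (b - a) (by omega)).1 ht.1.le
      · exact le_trans ht.2 hβ1
    calc ‖∫ t in β..(f (b - a)), G t‖ ≤ C * |f (b - a) - β| :=
          intervalIntegral.norm_integral_le_of_norm_le_const hbound
      _ ≤ C * (1 / m) := by
          apply mul_le_mul_of_nonneg_left _ hC0
          rw [abs_of_nonpos (by linarith), neg_sub, hflast]
          have he : ((b:ℝ) + 1) / m = (b:ℝ)/m + 1/m := by ring
          have h3 := hB2'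
          rw [he] at h3
          linarith
  -- combine
  rw [Real.dist_eq]
  have hfinal : |(1 / (m : ℝ)) * (∑ i ∈ Finset.Icc (a + 1) b, G ((i : ℝ) / m)) -
      ∫ t in α..β, G t| ≤ ε / 2 + (C * (1 / m) + C * (1 / m)) := by
    have hsplit : (1 / (m : ℝ)) * (∑ i ∈ Finset.Icc (a + 1) b, G ((i : ℝ) / m)) -
        (∫ t in α..β, G t) =
        ((1 / (m : ℝ)) * (∑ i ∈ Finset.Icc (a + 1) b, G ((i : ℝ) / m)) -
          ∫ t in (f 0)..(f (b - a)), G t) +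
        ((∫ t in (f 0)..α, G t) + ∫ t in β..(f (b - a)), G t) := by
      rw [← hedge]; ring
    rw [hsplit]
    calc |_ + _| ≤ _ := abs_add_le _ _
      _ ≤ ε / 2 + (C * (1 / m) + C * (1 / m)) := by
          apply add_le_add hsum_est
          calc |(∫ t in (f 0)..α, G t) + ∫ t in β..(f (b - a)), G t| ≤ _ := abs_add_le _ _
            _ ≤ C * (1 / m) + C * (1 / m) := add_le_add hedge1 hedge2
  have hCsmall : C * (1 / (m : ℝ)) < ε / 4 := by
    calc C * (1 / (m : ℝ)) ≤ (C + 1) * (1 / m) := by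
          apply mul_le_mul_of_nonneg_right (by linarith) (by positivity)
      _ = (C + 1) / m := by ring
      _ < ε / 4 := hCm
  calc |(1 / (m : ℝ)) * (∑ i ∈ Finset.Icc (a + 1) b, G ((i : ℝ) / m)) -
      ∫ t in α..β, G t| ≤ ε / 2 + (C * (1 / m) + C * (1 / m)) := hfinal
    _ < ε / 2 + (ε / 4 + ε / 4) := by linarith
    _ = ε := by ring

theorem riemann_sum_convergence (s : ℕ) (hs : 0 < s) (x : ℝ)
    (hx : x ∈ Set.Ioo (0 : ℝ) 1) (F : ℝ → ℝ)
    (hF : ContinuousOn F (Set.Icc (1 / ((s : ℝ) + 1)) (1 / (s : ℝ)))) :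
    Tendsto
      (fun n : ℕ =>
        (1 / (n : ℝ)) *
          ∑ i ∈ Finset.Icc ((n - ⌊x * n⌋₊) / (s + 1) + 1) ((n - ⌊x * n⌋₊) / s),
            F ((i : ℝ) / ((n : ℝ) - (⌊x * n⌋₊ : ℝ))))
      atTop
      (𝓝 ((1 - x) * ∫ t in (1 / ((s : ℝ) + 1))..(1 / (s : ℝ)), F t)) := by
  obtain ⟨hx0, hx1⟩ := hx
  set α : ℝ := 1 / ((s : ℝ) + 1) with hα_def
  set β : ℝ := 1 / (s : ℝ) with hβ_def
  have hsR : (0 : ℝ) < s := by exact_mod_cast hs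
  have hα0 : 0 < α := by positivity
  have hαβ : α ≤ β := by
    apply one_div_le_one_div_of_le hsR; linarith
  -- clamped function
  set c : ℝ → ℝ := fun t => max α (min t β) with hc_def
  have hc_cont : Continuous c := continuous_const.max (continuous_id.min continuous_const)
  have hc_mem : ∀ t, c t ∈ Set.Icc α β := fun t =>
    ⟨le_max_left _ _, max_le hαβ (min_le_right _ _)⟩
  have hc_eq : ∀ t ∈ Set.Icc α β, c t = t := by
    intro t ht
    simp only [hc_def]
    rw [min_eq_left ht.2, max_eq_right ht.1]
  set G : ℝ → ℝ := fun t => F (c t) with hG_def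
  have hG_cont : Continuous G := hF.comp_continuous hc_cont hc_mem
  have hG_eq : ∀ t ∈ Set.Icc α β, G t = F t := fun t ht => by
    simp only [hG_def]; rw [hc_eq t ht]
  have hint_eq : (∫ t in α..β, G t) = ∫ t in α..β, F t := by
    apply intervalIntegral.integral_congr
    rw [Set.uIcc_of_le hαβ]
    exact hG_eq
  -- floor facts
  have hfloor : ∀ n : ℕ, 0 < n → ⌊x * n⌋₊ < n := by
    intro n hn
    have hnR : (0 : ℝ) < n := by exact_mod_cast hn
    have h1 : (⌊x * n⌋₊ : ℝ) ≤ x * n := Nat.floor_le (by positivity)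
    have h2 : x * n < n := by nlinarith
    exact_mod_cast lt_of_le_of_lt h1 h2
  set m : ℕ → ℕ := fun n => n - ⌊x * n⌋₊ with hm_def
  have hm_cast : ∀ n : ℕ, 0 < n → (m n : ℝ) = (n : ℝ) - (⌊x * n⌋₊ : ℝ) := by
    intro n hn
    simp only [hm_def]
    rw [Nat.cast_sub (hfloor n hn).le]
  have hm_pos : ∀ n : ℕ, 0 < n → 0 < m n := by
    intro n hn
    have := hfloor n hn
    simp only [hm_def]
    omega
  -- ratio tendsto
  have hratio : Tendsto (fun n : ℕ => (m n : ℝ) / n) atTop (𝓝 (1 - x)) := by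
    have h1 : Tendsto (fun n : ℕ => (⌊x * (n : ℝ)⌋₊ : ℝ) / n) atTop (𝓝 x) :=
      (tendsto_nat_floor_mul_div_atTop hx0.le).comp tendsto_natCast_atTop_atTop
    have h2 : Tendsto (fun n : ℕ => 1 - (⌊x * (n : ℝ)⌋₊ : ℝ) / n) atTop (𝓝 (1 - x)) :=
      tendsto_const_nhds.sub h1
    apply h2.congr'
    filter_upwards [eventually_gt_atTop 0] with n hn
    have hnR : (0 : ℝ) < n := by exact_mod_cast hn
    rw [hm_cast n hn, sub_div, div_self hnR.ne']
  have hm_top : Tendsto m atTop atTop := by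
    rw [← tendsto_natCast_atTop_iff (R := ℝ)]
    have h1 : Tendsto (fun n : ℕ => (n : ℝ) * ((m n : ℝ) / n)) atTop atTop :=
      tendsto_natCast_atTop_atTop.atTop_mul_pos (by linarith) hratio
    apply h1.congr'
    filter_upwards [eventually_gt_atTop 0] with n hn
    have hnR : (0 : ℝ) < n := by exact_mod_cast hn
    field_simp
  -- composed Riemann sum
  have hScore := (riemann_core s hs G hG_cont).comp hm_top
  have hmul : Tendsto (fun n : ℕ => ((m n : ℝ) / n) *
      ((1 / (m n : ℝ)) * ∑ i ∈ Finset.Icc (m n / (s + 1) + 1) (m n / s),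
        G ((i : ℝ) / (m n : ℝ)))) atTop (𝓝 ((1 - x) * ∫ t in α..β, G t)) :=
    hratio.mul hScore
  rw [hint_eq] at hmul
  apply hmul.congr'
  filter_upwards [eventually_gt_atTop 0] with n hn
  have hnR : (0 : ℝ) < n := by exact_mod_cast hn
  have hmn := hm_pos n hn
  have hmnR : (0 : ℝ) < (m n : ℝ) := by exact_mod_cast hmn
  -- points are in [α, β]
  have hpts : ∀ i ∈ Finset.Icc (m n / (s + 1) + 1) (m n / s),
      G ((i : ℝ) / (m n : ℝ)) = F ((i : ℝ) / (m n : ℝ)) := by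
    intro i hi
    rw [Finset.mem_Icc] at hi
    obtain ⟨hA1, hA2⟩ := nat_div_bounds (m n) (s + 1) (by omega) hmn
    obtain ⟨hB1, hB2⟩ := nat_div_bounds (m n) s hs hmn
    apply hG_eq
    constructor
    · have h1 : ((m n / (s + 1) : ℕ) : ℝ) + 1 ≤ (i : ℝ) := by exact_mod_cast hi.1
      have hαval : α < (((m n / (s + 1) : ℕ) : ℝ) + 1) / (m n : ℝ) := by
        rw [hα_def]; convert hA2 using 2 <;> push_cast <;> ring
      have h2 : (((m n / (s + 1) : ℕ) : ℝ) + 1) / (m n : ℝ) ≤ (i : ℝ) / (m n : ℝ) := by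
        gcongr
      linarith
    · have h1 : (i : ℝ) ≤ ((m n / s : ℕ) : ℝ) := by exact_mod_cast hi.2
      have h2 : (i : ℝ) / (m n : ℝ) ≤ ((m n / s : ℕ) : ℝ) / (m n : ℝ) := by
        gcongr
      linarith [hB1]
  have hFG : ∑ i ∈ Finset.Icc (m n / (s + 1) + 1) (m n / s), G ((i : ℝ) / (m n : ℝ)) =
      ∑ i ∈ Finset.Icc (m n / (s + 1) + 1) (m n / s), F ((i : ℝ) / (m n : ℝ)) :=
    Finset.sum_congr rfl hpts
  show ((m n : ℝ) / n) * ((1 / (m n : ℝ)) *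
      ∑ i ∈ Finset.Icc (m n / (s + 1) + 1) (m n / s), G ((i : ℝ) / (m n : ℝ))) =
    (1 / (n : ℝ)) * ∑ i ∈ Finset.Icc ((n - ⌊x * n⌋₊) / (s + 1) + 1) ((n - ⌊x * n⌋₊) / s),
      F ((i : ℝ) / ((n : ℝ) - (⌊x * n⌋₊ : ℝ)))
  rw [hFG, ← hm_cast n hn]
  simp only [hm_def]
  field_simp
  ring_nf
  rw [mul_inv_cancel₀ (show ((n - ⌊x * n⌋₊ : ℕ) : ℝ) ≠ 0 from hmnR.ne'), one_mul]
  exact Finset.sum_congr rfl fun i _ => by rw [mul_comm]
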